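/- arXiv:2412.13515 — 3 statements merged into one kernel-verified Lean document; each statement's English description precedes it below -/
import Mathlib

section
/- Conversely, if μ = Σ_j ω_j π_j is a convex combination of the stationary measures π_j on the closed irreducible classes of the chain with rates R₀, and J = J_{μ,R₀}, then J is divergence-free and I⁽⁰⁾(μ,J) = Σ_{(x,y)∈E₀} Φ(J(x,y), μ(x)R₀(x,y)) = 0. -/
noncomputable def Phi (q p : ℝ) : EReal :=
  if q = 0 then (p : EReal)
  else if p = 0 then ⊤
  else ((q * Real.log (q / p) - (q - p) : ℝ) : EReal)

lemma Phi_self (q : ℝ) : Phi q q = 0 := by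
  unfold Phi
  by_cases h : q = 0
  · simp [h]
  · simp [h]

theorem stmt_8 {V : Type*} [Fintype V] [DecidableEq V]
    (R₀ : V → V → ℝ) (hR0 : ∀ x y, 0 ≤ R₀ x y) (hRdiag : ∀ x, R₀ x x = 0)
    (n : ℕ) (𝒱 : Fin n → Finset V)
    (hdisj : ∀ i j, i ≠ j → Disjoint (𝒱 i) (𝒱 j))
    -- each `𝒱 j` is a closed class
    (hclosed : ∀ j, ∀ x ∈ 𝒱 j, ∀ y, y ∉ 𝒱 j → R₀ x y = 0)
    -- `π j` is the stationary probability measure of the chain restricted to `𝒱 j`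
    (π : Fin n → V → ℝ)
    (hπ0 : ∀ j x, 0 ≤ π j x) (hπ1 : ∀ j, ∑ x, π j x = 1)
    (hπsupp : ∀ j x, x ∉ 𝒱 j → π j x = 0)
    (hπstat : ∀ j x, ∑ y, π j y * R₀ y x = π j x * ∑ y, R₀ x y)
    -- μ is a convex combination of the π j, and J = J_{μ,R₀}
    (ω : Fin n → ℝ) (hω0 : ∀ j, 0 ≤ ω j) (hω1 : ∑ j, ω j = 1)
    (μ : V → ℝ) (hμ : ∀ x, μ x = ∑ j, ω j * π j x)
    (J : V → V → ℝ) (hJ : ∀ x y, J x y = μ x * R₀ x y) :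
    (∀ x, ∑ y, J x y = ∑ y, J y x) ∧
    ∑ x, ∑ y,
        (if x ≠ y ∧ 0 < R₀ x y then Phi (J x y) (μ x * R₀ x y) else 0)
      = (0 : EReal) := by
  constructor
  · intro x
    simp only [hJ]
    calc ∑ y, μ x * R₀ x y = μ x * ∑ y, R₀ x y := by rw [Finset.mul_sum]
      _ = ∑ j, ω j * (π j x * ∑ y, R₀ x y) := by
          rw [hμ, Finset.sum_mul]
          exact Finset.sum_congr rfl fun j _ => by ring
      _ = ∑ j, ω j * ∑ y, π j y * R₀ y x := by
          exact Finset.sum_congr rfl fun j _ => by rw [hπstat]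
      _ = ∑ y, μ y * R₀ y x := by
          simp only [Finset.mul_sum]
          rw [Finset.sum_comm]
          refine Finset.sum_congr rfl fun y _ => ?_
          rw [hμ, Finset.sum_mul]
          exact Finset.sum_congr rfl fun j _ => by ring
  · have : ∀ x y : V, (if x ≠ y ∧ 0 < R₀ x y then Phi (J x y) (μ x * R₀ x y) else 0)
        = (0 : EReal) := by
      intro x y
      split
      · rw [hJ, Phi_self]
      · rfl
    simp only [this, Finset.sum_const_zero]
end

section
/- Let (X_t) be the three-state Markov chain on V = {a,b,c} with jump rates R(a,b) = R(b,c) = R(c,a) = 1 and zero otherwise. Then the Donsker–Varadhan rate functional ℐ(μ) = sup_{u>0} −Σ_x μ(x) (ℒu)(x)/u(x) equals 1 − 3(μ_a μ_b μ_c)^{1/3} for every probability measure μ on V. In particular, ℐ coincides with the rate functional of the chain jumping in the reverse cyclic order. -/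
/-- Donsker–Varadhan rate functional: supremum over strictly positive functions
`u` of `-∑_x μ(x) (ℒu)(x)/u(x)`. -/
noncomputable def DV {V : Type*} [Fintype V] (R : V → V → ℝ) (μ : V → ℝ) : ℝ :=
  ⨆ u : {u : V → ℝ // ∀ x, 0 < u x},
    -∑ x, μ x * ((∑ y, R x y * (u.1 y - u.1 x)) / u.1 x)

/-- Cyclic chain `a → b → c → a` at rate 1 on `{a,b,c} = {0,1,2}`. -/
noncomputable def Rfwd : Fin 3 → Fin 3 → ℝ := fun x y =>
  if (x, y) = (0, 1) ∨ (x, y) = (1, 2) ∨ (x, y) = (2, 0) then 1 else 0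

/-- The reverse cyclic chain `a → c → b → a` at rate 1. -/
noncomputable def Rbwd : Fin 3 → Fin 3 → ℝ := fun x y =>
  if (x, y) = (1, 0) ∨ (x, y) = (2, 1) ∨ (x, y) = (0, 2) then 1 else 0

open Real Filter

/-- Three-term weighted AM–GM under the product-one constraint. -/
lemma amgm3 {a b c t0 t1 t2 : ℝ} (ha : 0 ≤ a) (hb : 0 ≤ b) (hc : 0 ≤ c)
    (h0 : 0 < t0) (h1 : 0 < t1) (h2 : 0 < t2) (ht : t0 * t1 * t2 = 1) :
    3 * (a * b * c) ^ ((1 : ℝ) / 3) ≤ a * t0 + b * t1 + c * t2 := by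
  have key := Real.geom_mean_le_arith_mean3_weighted
    (by norm_num : (0:ℝ) ≤ 1/3) (by norm_num : (0:ℝ) ≤ 1/3) (by norm_num : (0:ℝ) ≤ 1/3)
    (mul_nonneg ha h0.le) (mul_nonneg hb h1.le) (mul_nonneg hc h2.le)
    (by norm_num : (1:ℝ)/3 + 1/3 + 1/3 = 1)
  have hprod : (a * t0) ^ ((1:ℝ)/3) * (b * t1) ^ ((1:ℝ)/3) * (c * t2) ^ ((1:ℝ)/3)
      = (a * b * c) ^ ((1:ℝ)/3) := by
    rw [← Real.mul_rpow (mul_nonneg ha h0.le) (mul_nonneg hb h1.le),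
      ← Real.mul_rpow (by positivity) (mul_nonneg hc h2.le)]
    congr 1
    linear_combination (a * b * c) * ht
  rw [hprod] at key
  linarith

/-- Abstract computation of the supremum for functionals of the given shape. -/
lemma sup_form (μ : Fin 3 → ℝ) (hμ0 : ∀ x, 0 ≤ μ x)
    (F : {u : Fin 3 → ℝ // ∀ x, 0 < u x} → ℝ)
    (hub : ∀ u, ∃ t0 t1 t2 : ℝ, 0 < t0 ∧ 0 < t1 ∧ 0 < t2 ∧ t0 * t1 * t2 = 1 ∧
      F u = 1 - (μ 0 * t0 + μ 1 * t1 + μ 2 * t2))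
    (hlb : ∀ t0 t1 t2 : ℝ, 0 < t0 → 0 < t1 → 0 < t2 → t0 * t1 * t2 = 1 →
      ∃ u, F u = 1 - (μ 0 * t0 + μ 1 * t1 + μ 2 * t2)) :
    (⨆ u, F u) = 1 - 3 * (μ 0 * μ 1 * μ 2) ^ ((1 : ℝ) / 3) := by
  have hFle : ∀ u, F u ≤ 1 - 3 * (μ 0 * μ 1 * μ 2) ^ ((1 : ℝ) / 3) := by
    intro u
    obtain ⟨t0, t1, t2, h0, h1, h2, ht, hF⟩ := hub u
    have := amgm3 (hμ0 0) (hμ0 1) (hμ0 2) h0 h1 h2 ht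
    linarith
  have hbdd : BddAbove (Set.range F) := ⟨_, Set.forall_mem_range.2 hFle⟩
  have hne : Nonempty {u : Fin 3 → ℝ // ∀ x, 0 < u x} :=
    ⟨⟨fun _ => 1, fun _ => one_pos⟩⟩
  refine le_antisymm (ciSup_le hFle) ?_
  -- lower bound via perturbation μ + δ
  have hδ : ∀ δ : ℝ, 0 < δ →
      1 - 3 * ((μ 0 + δ) * (μ 1 + δ) * (μ 2 + δ)) ^ ((1 : ℝ) / 3) ≤ ⨆ u, F u := by
    intro δ hδ
    have hm : ∀ i : Fin 3, 0 < μ i + δ := fun i => by have := hμ0 i; linarith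
    set P : ℝ := (μ 0 + δ) * (μ 1 + δ) * (μ 2 + δ) with hP
    have hPpos : 0 < P := by
      rw [hP]; exact mul_pos (mul_pos (hm 0) (hm 1)) (hm 2)
    set g : ℝ := P ^ ((1:ℝ)/3) with hg
    have hgpos : 0 < g := Real.rpow_pos_of_pos hPpos _
    have hg3 : g ^ 3 = P := by
      rw [hg, ← Real.rpow_natCast (P ^ ((1:ℝ)/3)) 3, ← Real.rpow_mul hPpos.le]
      norm_num
    have hprod : (g / (μ 0 + δ)) * (g / (μ 1 + δ)) * (g / (μ 2 + δ)) = 1 := by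
      rw [div_mul_div_comm, div_mul_div_comm, div_eq_one_iff_eq hPpos.ne']
      linear_combination hg3
    obtain ⟨u, hu⟩ := hlb _ _ _ (div_pos hgpos (hm 0)) (div_pos hgpos (hm 1))
      (div_pos hgpos (hm 2)) hprod
    have hsum : μ 0 * (g / (μ 0 + δ)) + μ 1 * (g / (μ 1 + δ)) + μ 2 * (g / (μ 2 + δ))
        ≤ 3 * g := by
      have h0 : μ 0 * (g / (μ 0 + δ)) ≤ g := by
        rw [mul_div_assoc', div_le_iff₀ (hm 0)]
        nlinarith [hμ0 0, hgpos]
      have h1 : μ 1 * (g / (μ 1 + δ)) ≤ g := by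
        rw [mul_div_assoc', div_le_iff₀ (hm 1)]
        nlinarith [hμ0 1, hgpos]
      have h2 : μ 2 * (g / (μ 2 + δ)) ≤ g := by
        rw [mul_div_assoc', div_le_iff₀ (hm 2)]
        nlinarith [hμ0 2, hgpos]
      linarith
    have hFu : 1 - 3 * g ≤ F u := by rw [hu]; linarith
    exact hFu.trans (le_ciSup hbdd u)
  -- pass to the limit δ → 0⁺
  have hcont : Filter.Tendsto
      (fun δ : ℝ => 1 - 3 * ((μ 0 + δ) * (μ 1 + δ) * (μ 2 + δ)) ^ ((1 : ℝ) / 3))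
      (nhdsWithin 0 (Set.Ioi 0)) (nhds (1 - 3 * (μ 0 * μ 1 * μ 2) ^ ((1 : ℝ) / 3))) := by
    have h3 : ContinuousAt
        (fun δ : ℝ => 1 - 3 * ((μ 0 + δ) * (μ 1 + δ) * (μ 2 + δ)) ^ ((1 : ℝ) / 3)) 0 := by
      apply ContinuousAt.sub continuousAt_const
      apply ContinuousAt.mul continuousAt_const
      exact ContinuousAt.rpow_const (by fun_prop) (Or.inr (by norm_num))
    have h := h3.tendsto.mono_left (nhdsWithin_le_nhds (s := Set.Ioi 0))
    simpa using h
  exact le_of_tendsto hcont (eventually_mem_nhdsWithin.mono (fun δ h => hδ δ h))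

lemma fwd_val (μ : Fin 3 → ℝ) (hμ1 : ∑ x, μ x = 1) (u : Fin 3 → ℝ) (hu : ∀ x, 0 < u x) :
    -∑ x, μ x * ((∑ y, Rfwd x y * (u y - u x)) / u x)
      = 1 - (μ 0 * (u 1 / u 0) + μ 1 * (u 2 / u 1) + μ 2 * (u 0 / u 2)) := by
  rw [Fin.sum_univ_three] at hμ1 ⊢
  simp only [Fin.sum_univ_three, Rfwd, Prod.mk.injEq]
  norm_num [Fin.ext_iff]
  have h0 := (hu 0).ne'
  have h1 := (hu 1).ne'
  have h2 := (hu 2).ne'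
  field_simp
  linear_combination (u 0 * u 1 * u 2) * hμ1

lemma bwd_val (μ : Fin 3 → ℝ) (hμ1 : ∑ x, μ x = 1) (u : Fin 3 → ℝ) (hu : ∀ x, 0 < u x) :
    -∑ x, μ x * ((∑ y, Rbwd x y * (u y - u x)) / u x)
      = 1 - (μ 0 * (u 2 / u 0) + μ 1 * (u 0 / u 1) + μ 2 * (u 1 / u 2)) := by
  rw [Fin.sum_univ_three] at hμ1 ⊢
  simp only [Fin.sum_univ_three, Rbwd, Prod.mk.injEq]
  norm_num [Fin.ext_iff]
  have h0 := (hu 0).ne'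
  have h1 := (hu 1).ne'
  have h2 := (hu 2).ne'
  field_simp
  linear_combination (u 0 * u 1 * u 2) * hμ1

theorem stmt_12 (μ : Fin 3 → ℝ) (hμ0 : ∀ x, 0 ≤ μ x) (hμ1 : ∑ x, μ x = 1) :
    DV Rfwd μ = 1 - 3 * (μ 0 * μ 1 * μ 2) ^ ((1 : ℝ) / 3) ∧
    DV Rbwd μ = DV Rfwd μ := by
  have hf : DV Rfwd μ = 1 - 3 * (μ 0 * μ 1 * μ 2) ^ ((1 : ℝ) / 3) := by
    apply sup_form μ hμ0
    · rintro ⟨u, hu⟩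
      refine ⟨u 1 / u 0, u 2 / u 1, u 0 / u 2, div_pos (hu 1) (hu 0), div_pos (hu 2) (hu 1),
        div_pos (hu 0) (hu 2), ?_, fwd_val μ hμ1 u hu⟩
      rw [div_mul_div_comm, div_mul_div_comm,
        div_eq_one_iff_eq (mul_pos (mul_pos (hu 0) (hu 1)) (hu 2)).ne']
      ring
    · intro t0 t1 t2 h0 h1 h2 ht
      have hupos : ∀ x : Fin 3, 0 < (![1, t0, t0 * t1] : Fin 3 → ℝ) x := by
        intro x; fin_cases x <;> simp <;> positivity
      refine ⟨⟨![1, t0, t0 * t1], hupos⟩, ?_⟩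
      rw [fwd_val μ hμ1 _ hupos]
      have e2 : t0 * t1 / t0 = t1 := by
        rw [mul_comm, mul_div_assoc, div_self h0.ne', mul_one]
      have e3 : (1 : ℝ) / (t0 * t1) = t2 := by
        rw [div_eq_iff (by positivity)]
        linear_combination -ht
      simp only [Matrix.cons_val_zero, Matrix.cons_val_one, Matrix.head_cons,
        Matrix.cons_val_two, Matrix.tail_cons]
      rw [div_one, e2, e3]
  refine ⟨hf, ?_⟩
  rw [hf]
  apply sup_form μ hμ0
  · rintro ⟨u, hu⟩
    refine ⟨u 2 / u 0, u 0 / u 1, u 1 / u 2, div_pos (hu 2) (hu 0), div_pos (hu 0) (hu 1),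
      div_pos (hu 1) (hu 2), ?_, bwd_val μ hμ1 u hu⟩
    rw [div_mul_div_comm, div_mul_div_comm,
      div_eq_one_iff_eq (mul_pos (mul_pos (hu 0) (hu 1)) (hu 2)).ne']
    ring
  · intro t0 t1 t2 h0 h1 h2 ht
    have hupos : ∀ x : Fin 3, 0 < (![1, 1 / t1, t0] : Fin 3 → ℝ) x := by
      intro x; fin_cases x <;> simp <;> positivity
    refine ⟨⟨![1, 1 / t1, t0], hupos⟩, ?_⟩
    rw [bwd_val μ hμ1 _ hupos]
    have e3 : (1 / t1) / t0 = t2 := by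
      rw [div_div, div_eq_iff (by positivity)]
      linear_combination -ht
    simp only [Matrix.cons_val_zero, Matrix.cons_val_one, Matrix.head_cons,
      Matrix.cons_val_two, Matrix.tail_cons]
    rw [div_one, one_div_one_div, e3]
end

section
/- For any continuous-time Markov chain with generator ℒ on a finite set V and any function H : V → ℝ, the identity Σ_{x,y} μ(x)R(x,y)(1 − e^{H(y)−H(x)}) = Σ_{x,y} μ(x)R(x,y)·((H(y)−H(x))e^{H(y)−H(x)} − e^{H(y)−H(x)} + 1) holds whenever μ is stationary for the tilted generator ℒ_H; moreover each summand ((H(y)−H(x))e^{H(y)−H(x)} − e^{H(y)−H(x)} + 1) is nonnegative, since t·e^t − e^t + 1 ≥ 0 for all real t. -/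
theorem stmt_18 {V : Type*} [Fintype V]
    (R : V → V → ℝ) (hR : ∀ x y, 0 ≤ R x y)
    (μ : V → ℝ) (hμ0 : ∀ x, 0 ≤ μ x) (hμ1 : ∑ x, μ x = 1)
    (H : V → ℝ)
    -- μ is stationary for the tilted rates `R_H(x,y) = R(x,y) e^{H(y)−H(x)}`
    (hstat : ∀ g : V → ℝ,
      ∑ x, ∑ y, μ x * (R x y * Real.exp (H y - H x)) * (g y - g x) = 0) :
    (∑ x, ∑ y, μ x * R x y * (1 - Real.exp (H y - H x))
      = ∑ x, ∑ y, μ x * R x y *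
          ((H y - H x) * Real.exp (H y - H x) - Real.exp (H y - H x) + 1)) ∧
    (∀ x y : V,
      0 ≤ (H y - H x) * Real.exp (H y - H x) - Real.exp (H y - H x) + 1) := by
  constructor
  · have h := hstat H
    have e : ∀ x y : V, μ x * R x y *
        ((H y - H x) * Real.exp (H y - H x) - Real.exp (H y - H x) + 1)
        = μ x * R x y * (1 - Real.exp (H y - H x))
          + μ x * (R x y * Real.exp (H y - H x)) * (H y - H x) := by
      intro x y; ring
    simp only [e, Finset.sum_add_distrib]
    rw [h, add_zero]
  · intro x y
    set t := H y - H x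
    have h1 : -t + 1 ≤ Real.exp (-t) := Real.add_one_le_exp (-t)
    have h2 : Real.exp (-t) * Real.exp t = 1 := by
      rw [← Real.exp_add]; simp
    nlinarith [Real.exp_pos t, Real.exp_pos (-t)]
end
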